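/- arXiv:1409.5878 — 3 statements merged into one kernel-verified Lean document; each statement's English description precedes it below -/
import Mathlib

section
/- Let K/k be a field extension in characteristic zero and ∂ : K → K a nonzero k-derivation. If K is the fraction field of Nil(∂) = ∪_{n≥0} ker ∂^n (i.e. ∂ is locally nilpotent in the sense of Makar-Limanov), then K is a purely transcendental extension of degree one over ker ∂; in particular there exists s ∈ K with ∂(s) = 1 and K = (ker ∂)(s). -/
open Polynomial

section MLSliceAux

variable {k K : Type*} [Field k] [CharZero k] [Field K] [Algebra k K]

omit [CharZero k] in
lemma MLaux_eval_deriv (D : Derivation k K K) (s : K) (p : Polynomial K)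
    (hp : ∀ i, D (p.coeff i) = 0) :
    D (p.eval s) = (derivative p).eval s * D s := by
  rw [Derivation.apply_eval_eq]
  have h0 : D.mapCoeffs p = 0 := PolynomialModule.ext (Finsupp.ext fun i => by
    simpa [Derivation.mapCoeffs_apply] using hp i)
  rw [h0, map_zero, zero_add, smul_eq_mul]

noncomputable def MLantider (q : Polynomial K) : Polynomial K :=
  q.sum fun i a => C (a / ((i : K) + 1)) * X ^ (i + 1)

lemma MLaux_derivative_antider [CharZero K] (q : Polynomial K) :
    derivative (MLantider q) = q := by
  unfold MLantider
  rw [Polynomial.sum, map_sum]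
  have : ∀ i ∈ q.support, derivative (C (q.coeff i / ((i : K) + 1)) * X ^ (i + 1))
      = C (q.coeff i) * X ^ i := by
    intro i _
    rw [derivative_C_mul_X_pow, Nat.add_sub_cancel]
    push_cast
    rw [div_mul_cancel₀ _ (Nat.cast_add_one_ne_zero i)]
  rw [Finset.sum_congr rfl this]
  exact q.sum_C_mul_X_pow_eq

omit [CharZero k] in
lemma MLaux_antider_coeff (D : Derivation k K K) (q : Polynomial K)
    (hq : ∀ i, D (q.coeff i) = 0) (j : ℕ) :
    D ((MLantider q).coeff j) = 0 := by
  unfold MLantider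
  rw [Polynomial.sum, Polynomial.finset_sum_coeff, map_sum]
  apply Finset.sum_eq_zero
  intro i _
  rw [coeff_C_mul, coeff_X_pow]
  split_ifs with h
  · rw [mul_one, D.leibniz_div_const (q.coeff i) _ (by simp), hq, smul_zero]
  · simp

end MLSliceAux

/-- let ∂ be a nonzero k-derivation of a field extension K/k
(char k = 0) which is locally nilpotent in the sense of Makar-Limanov, i.e. K is the
fraction field of Nil(∂) = ∪ₙ ker ∂ⁿ (every element of K is a quotient of elements
killed by powers of ∂).  Then K is purely transcendental of degree one over
K₀ = ker ∂: there is s ∈ K with ∂(s) = 1, s transcendental over K₀, and every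
element of K a rational function in s with coefficients in K₀. -/
theorem ml_lnd_gives_slice (k : Type*) [Field k] [CharZero k]
    (K : Type*) [Field K] [Algebra k K]
    (D : Derivation k K K) (hD : D ≠ 0)
    (hfrac : ∀ x : K, ∃ a b : K, (∃ n : ℕ, (⇑D)^[n] a = 0) ∧
      (∃ n : ℕ, (⇑D)^[n] b = 0) ∧ b ≠ 0 ∧ x = a / b) :
    ∃ s : K, D s = 1 ∧
      (∀ P : Polynomial K, (∀ i : ℕ, D (P.coeff i) = 0) →
        Polynomial.eval s P = 0 → P = 0) ∧
      (∀ f : K, ∃ p q : Polynomial K,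
        (∀ i : ℕ, D (p.coeff i) = 0) ∧ (∀ i : ℕ, D (q.coeff i) = 0) ∧
        Polynomial.eval s q ≠ 0 ∧
        f = Polynomial.eval s p / Polynomial.eval s q) := by
  classical
  haveI : CharZero K := charZero_of_injective_algebraMap (algebraMap k K).injective
  -- find u nilpotent with D u ≠ 0
  obtain ⟨x, hx⟩ : ∃ x : K, D x ≠ 0 := by
    by_contra h
    push_neg at h
    exact hD (by ext y; simp [h])
  obtain ⟨a, b, ⟨na, hna⟩, ⟨nb, hnb⟩, hb0, hxab⟩ := hfrac x
  have hu : ∃ u : K, D u ≠ 0 ∧ ∃ n : ℕ, (⇑D)^[n] u = 0 := by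
    by_cases ha : D a = 0
    · by_cases hb : D b = 0
      · exfalso
        apply hx
        rw [hxab, D.leibniz_div_const a b hb, ha, smul_zero]
      · exact ⟨b, hb, nb, hnb⟩
    · exact ⟨a, ha, na, hna⟩
  obtain ⟨u, hu0, hnil⟩ := hu
  -- minimal m with D^[m] u = 0
  let m := Nat.find hnil
  have hm : (⇑D)^[m] u = 0 := Nat.find_spec hnil
  have hm2 : 2 ≤ m := by
    by_contra h
    interval_cases m
    · exact hu0 (by rw [show (⇑D)^[0] u = u from rfl] at hm; simp [hm])
    · exact hu0 hm
  obtain ⟨j, hj⟩ : ∃ j, m = j + 2 := ⟨m - 2, by omega⟩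
  set t : K := (⇑D)^[j] u with ht
  have hDt : D t = (⇑D)^[j + 1] u := (Function.iterate_succ_apply' (⇑D) j u).symm
  have hDt0 : D t ≠ 0 := by
    rw [hDt]
    exact Nat.find_min hnil (by omega)
  have hDDt : D (D t) = 0 := by
    have h2 : (⇑D)^[j + 2] u = 0 := by rw [← hj]; exact hm
    rw [hDt, ← Function.iterate_succ_apply' (⇑D) (j + 1) u]
    exact h2
  set s : K := t / D t with hs
  have hs1 : D s = 1 := by
    rw [hs, D.leibniz_div_const t (D t) hDDt, smul_eq_mul, inv_mul_cancel₀ hDt0]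
  refine ⟨s, hs1, ?_, ?_⟩
  · -- transcendence
    suffices H : ∀ n (P : Polynomial K), P.natDegree ≤ n →
        (∀ i : ℕ, D (P.coeff i) = 0) → Polynomial.eval s P = 0 → P = 0 by
      intro P hP h0
      exact H P.natDegree P le_rfl hP h0
    intro n
    induction n with
    | zero =>
      intro P hdeg hP h0
      rw [Polynomial.eq_C_of_natDegree_le_zero hdeg] at h0 ⊢
      rw [eval_C] at h0
      rw [h0, map_zero]
    | succ n ih =>
      intro P hdeg hP h0
      have hd : derivative P = 0 := by
        apply ih
        · exact le_trans (natDegree_derivative_le P) (by omega)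
        · intro i
          rw [coeff_derivative, D.leibniz]
          simp [hP]
        · have := MLaux_eval_deriv D s P hP
          rw [h0, map_zero, hs1, mul_one] at this
          exact this.symm
      have : P.natDegree = 0 := natDegree_eq_zero_of_derivative_eq_zero hd
      rw [Polynomial.eq_C_of_natDegree_le_zero this.le] at h0 ⊢
      rw [eval_C] at h0
      rw [h0, map_zero]
  · -- rationality
    have key : ∀ n (a : K), (⇑D)^[n] a = 0 →
        ∃ p : Polynomial K, (∀ i : ℕ, D (p.coeff i) = 0) ∧ a = Polynomial.eval s p := by
      intro n
      induction n with
      | zero =>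
        intro a ha
        exact ⟨0, by simp, by simp [show a = 0 by simpa using ha]⟩
      | succ n ih =>
        intro a ha
        obtain ⟨q, hq, hqa⟩ := ih (D a) (by
          rw [← Function.iterate_succ_apply]
          exact ha)
        set r := MLantider q with hr
        have hrd : derivative r = q := MLaux_derivative_antider q
        have hrc : ∀ i, D (r.coeff i) = 0 := MLaux_antider_coeff D q hq
        have hc : D (a - Polynomial.eval s r) = 0 := by
          rw [map_sub, MLaux_eval_deriv D s r hrc, hrd, hs1, mul_one, ← hqa, sub_self]
        refine ⟨r + C (a - Polynomial.eval s r), ?_, ?_⟩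
        · intro i
          rw [coeff_add, map_add, hrc, coeff_C, zero_add]
          split_ifs with h
          · exact hc
          · exact D.map_zero
        · rw [eval_add, eval_C]
          ring
    intro f
    obtain ⟨a', b', ⟨na', hna'⟩, ⟨nb', hnb'⟩, hb0', hf⟩ := hfrac f
    obtain ⟨p, hp, hpa⟩ := key na' a' hna'
    obtain ⟨q, hq, hqb⟩ := key nb' b' hnb'
    exact ⟨p, q, hp, hq, by rw [← hqb]; exact hb0', by rw [hf, hpa, hqb]⟩
end

section
/- Let k be a field of characteristic zero. The derivation ∂ = x₁^{e₁+1}·x₂^{e₂}⋯x_n^{e_n}·∂/∂x₁ of the Laurent polynomial ring k[x₁^{±1},…,x_n^{±1}] with e₁,…,e_n ∈ ℤ and e₁ ≥ 0 induces a rationally integrable derivation of k(x₁,…,x_n) if and only if e₁ = 1. -/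
open Finset

namespace Stmt12

set_option linter.unusedSectionVars false

variable (k : Type*) [Field k] [CharZero k] {n : ℕ}
  {K : Type*} [Field K] [Algebra (AddMonoidAlgebra k (Fin (n + 1) → ℤ)) K]
  [IsFractionRing (AddMonoidAlgebra k (Fin (n + 1) → ℤ)) K]
  [Algebra k K] [IsScalarTower k (AddMonoidAlgebra k (Fin (n + 1) → ℤ)) K]

/-- the monomial x^v in K -/
noncomputable def φ (K : Type*) [Field K] [Algebra (AddMonoidAlgebra k (Fin (n + 1) → ℤ)) K]
    (v : Fin (n + 1) → ℤ) : K :=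
  algebraMap (AddMonoidAlgebra k (Fin (n + 1) → ℤ)) K (AddMonoidAlgebra.single v (1 : k))

lemma φ_add (v w : Fin (n + 1) → ℤ) : (φ k K (v + w)) = φ k K v * φ k K w := by
  rw [φ, φ, φ, ← map_mul, AddMonoidAlgebra.single_mul_single, one_mul]

lemma φ_zero : (φ k K (0 : Fin (n+1) → ℤ)) = (1 : K) := by
  rw [φ]
  have : (AddMonoidAlgebra.single (0 : Fin (n+1) → ℤ) (1:k)) = 1 := rfl
  rw [this, map_one]

lemma φ_ne (v : Fin (n + 1) → ℤ) : (φ k K v) ≠ 0 := by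
  rw [φ]
  intro h
  rw [show (0:K) = algebraMap (AddMonoidAlgebra k (Fin (n + 1) → ℤ)) K 0 from (map_zero _).symm]
    at h
  have := IsFractionRing.injective (AddMonoidAlgebra k (Fin (n + 1) → ℤ)) K h
  exact one_ne_zero (AddMonoidAlgebra.single_eq_zero.mp this)

lemma φ_mul_φ_neg (v : Fin (n + 1) → ℤ) : (φ k K v) * φ k K (-v) = 1 := by
  rw [← φ_add, add_neg_cancel, φ_zero]

lemma pi_decomp (v : Fin (n + 1) → ℤ) :
    v = ∑ i : Fin (n + 1), (v i) • Pi.single i (1 : ℤ) := by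
  funext j
  simp [Pi.single_apply, Finset.sum_apply, Finset.sum_ite_eq]

variable {k}

lemma Dmono (D : Derivation k K K) (e : Fin (n + 1) → ℤ)
    (hD1 : D (φ k K (Pi.single 0 1 : Fin (n+1) → ℤ)) = φ k K (e + Pi.single 0 1))
    (hD2 : ∀ i : Fin (n + 1), i ≠ 0 → D (φ k K (Pi.single i 1 : Fin (n+1) → ℤ)) = 0)
    (v : Fin (n + 1) → ℤ) :
    D (φ k K v) = ((v 0 : ℤ) : K) * φ k K (v + e) := by
  set A : AddSubgroup (Fin (n + 1) → ℤ) :=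
  { carrier := {v | D (φ k K v) = ((v 0 : ℤ) : K) * φ k K (v + e)}
    zero_mem' := by
      simp only [Set.mem_setOf_eq, φ_zero, Pi.zero_apply, Int.cast_zero, zero_mul]
      exact D.map_one_eq_zero
    add_mem' := by
      intro a b ha hb
      simp only [Set.mem_setOf_eq] at ha hb ⊢
      have h1 : φ k K a * φ k K (b + e) = φ k K (a + b + e) := by
        rw [← φ_add, add_assoc]
      have h2 : φ k K b * φ k K (a + e) = φ k K (a + b + e) := by
        rw [← φ_add, show b + (a + e) = a + b + e by ring]
      rw [φ_add, Derivation.leibniz, smul_eq_mul, smul_eq_mul, ha, hb,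
        mul_left_comm, h1, mul_left_comm, h2, Pi.add_apply, Int.cast_add]
      ring
    neg_mem' := by
      intro a ha
      simp only [Set.mem_setOf_eq] at ha ⊢
      have hinv : φ k K a * φ k K (-a) = 1 := φ_mul_φ_neg k a
      have hinv' : φ k K (-a) * φ k K a = 1 := by rw [mul_comm] at hinv; exact hinv
      have hae : φ k K (a + e) = φ k K a * φ k K e := φ_add k a e
      have hnae : φ k K (-a + e) = φ k K (-a) * φ k K e := φ_add k (-a) e
      rw [D.leibniz_of_mul_eq_one hinv', ha, smul_eq_mul, hae, hnae,
        Pi.neg_apply, Int.cast_neg]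
      linear_combination (-((a 0 : ℤ) : K) * φ k K e * φ k K (-a)) * hinv }
  have hgen : ∀ i : Fin (n + 1), Pi.single i (1 : ℤ) ∈ A := by
    intro i
    by_cases hi : i = 0
    · subst hi
      show D (φ k K (Pi.single 0 1)) = _
      rw [hD1, Pi.single_eq_same, Int.cast_one, one_mul, add_comm]
    · show D (φ k K (Pi.single i 1)) =
        (((Pi.single i 1 : Fin (n+1) → ℤ) 0 : ℤ) : K) * φ k K (Pi.single i 1 + e)
      rw [hD2 i hi, Pi.single_eq_of_ne (Ne.symm hi), Int.cast_zero, zero_mul]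
  have hv : (∑ i : Fin (n + 1), (v i) • Pi.single i (1 : ℤ)) ∈ A :=
    AddSubgroup.sum_mem A fun i _ => AddSubgroup.zsmul_mem A (hgen i) (v i)
  rw [← pi_decomp (n := n) v] at hv
  exact hv



/-- coefficient sequence: cseq e₀ j = ∏_{l<j} (1 + l e₀) -/
def cseq (e₀ : ℤ) : ℕ → ℤ
  | 0 => 1
  | j + 1 => (1 + j * e₀) * cseq e₀ j

lemma cseq_pos (e₀ : ℤ) (he : 0 ≤ e₀) (j : ℕ) : 0 < cseq e₀ j := by
  induction j with
  | zero => norm_num [cseq]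
  | succ j ih =>
    rw [cseq]
    have : (0:ℤ) < 1 + j * e₀ := by positivity
    positivity

lemma cseq_one (j : ℕ) : cseq 1 j = j.factorial := by
  induction j with
  | zero => rfl
  | succ j ih => rw [cseq, ih, Nat.factorial_succ]; push_cast; ring

lemma cseq_shift (e₀ : ℤ) (r i : ℕ) :
    cseq e₀ (r + i) = cseq e₀ r * ∏ l ∈ Finset.range i, (1 + (r + l) * e₀) := by
  induction i with
  | zero => simp
  | succ i ih =>
    rw [show r + (i+1) = (r+i) + 1 by ring, cseq, ih, Finset.prod_range_succ]
    push_cast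
    ring

lemma φ_nsmul (w : Fin (n + 1) → ℤ) (j : ℕ) : φ k K (j • w) = (φ k K w) ^ j := by
  induction j with
  | zero => simpa using φ_zero k
  | succ j ih => rw [succ_nsmul, φ_add, ih, pow_succ]

lemma D_intCast_mul (D : Derivation k K K) (m : ℤ) (x : K) :
    D ((m : K) * x) = (m : K) * D x := by
  rw [← zsmul_eq_mul, map_zsmul, zsmul_eq_mul]

lemma Diter (D : Derivation k K K) (e : Fin (n + 1) → ℤ)
    (hmono : ∀ v, D (φ k K v) = ((v 0 : ℤ) : K) * φ k K (v + e)) (j : ℕ) :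
    (⇑D)^[j] (φ k K (Pi.single 0 1 : Fin (n+1) → ℤ)) =
      ((cseq (e 0) j : ℤ) : K) * φ k K (Pi.single 0 1 + j • e) := by
  induction j with
  | zero => simp [cseq]
  | succ j ih =>
    rw [Function.iterate_succ_apply', ih, D_intCast_mul, hmono]
    have h0 : ((Pi.single 0 1 + j • e : Fin (n+1) → ℤ) 0 : ℤ) = 1 + (j : ℤ) * e 0 := by
      simp [Pi.single_eq_same, mul_comm]
    have hexp : ((Pi.single 0 1 + j • e : Fin (n+1) → ℤ)) + e = (Pi.single 0 1 : Fin (n+1) → ℤ) + (j + 1) • e := by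
      rw [succ_nsmul, add_assoc]
    rw [h0, hexp, cseq]
    push_cast
    ring

noncomputable def Acoef (D : Derivation k K K) (j : ℕ) (f : K) : K :=
  ((j.factorial : K))⁻¹ * (⇑D)^[j] f

lemma Acoef_zero (D : Derivation k K K) (f : K) : Acoef D 0 f = f := by simp [Acoef]

lemma D_natInv_mul (D : Derivation k K K) (m : ℕ) (x : K) :
    D (((m : K))⁻¹ * x) = ((m : K))⁻¹ * D x := by
  have h : ((m : K))⁻¹ = algebraMap k K (((m : k))⁻¹) := by
    rw [map_inv₀, map_natCast]
  rw [h, ← Algebra.smul_def, D.map_smul, Algebra.smul_def]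

lemma Acoef_succ (D : Derivation k K K) (j : ℕ) (f : K) :
    Acoef D (j+1) f = (((j : K) + 1))⁻¹ * D (Acoef D j f) := by
  rw [Acoef, Acoef, D_natInv_mul, Function.iterate_succ_apply', Nat.factorial_succ]
  push_cast [mul_inv]
  ring

lemma D_Acoef (D : Derivation k K K) (j : ℕ) (f : K) :
    D (Acoef D j f) = ((j : K) + 1) * Acoef D (j+1) f := by
  haveI : CharZero K := charZero_of_injective_algebraMap (algebraMap k K).injective
  rw [Acoef_succ, ← mul_assoc, mul_inv_cancel₀ (Nat.cast_add_one_ne_zero j), one_mul]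

lemma iter_add (D : Derivation k K K) (j : ℕ) (f g : K) :
    (⇑D)^[j] (f + g) = (⇑D)^[j] f + (⇑D)^[j] g := by
  induction j with
  | zero => rfl
  | succ j ih =>
    rw [Function.iterate_succ_apply', Function.iterate_succ_apply',
      Function.iterate_succ_apply', ih, map_add]

lemma Acoef_add (D : Derivation k K K) (j : ℕ) (f g : K) :
    Acoef D j (f + g) = Acoef D j f + Acoef D j g := by
  rw [Acoef, Acoef, Acoef, iter_add, mul_add]

lemma Acoef_mul (D : Derivation k K K) (j : ℕ) (f g : K) :
    Acoef D j (f * g) = ∑ i ∈ Finset.range (j+1), Acoef D i f * Acoef D (j-i) g := by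
  haveI : CharZero K := charZero_of_injective_algebraMap (algebraMap k K).injective
  induction j with
  | zero => simp [Acoef]
  | succ j ih =>
    have hne : ((j : K) + 1) ≠ 0 := Nat.cast_add_one_ne_zero j
    rw [Acoef_succ, ih, map_sum]
    have hterm : ∀ i ∈ Finset.range (j+1),
        D (Acoef D i f * Acoef D (j-i) g)
          = ((i:K)+1) * (Acoef D (i+1) f * Acoef D (j-i) g)
            + (((j-i : ℕ):K)+1) * (Acoef D i f * Acoef D ((j-i)+1) g) := by
      intro i _
      rw [Derivation.leibniz, smul_eq_mul, smul_eq_mul, D_Acoef, D_Acoef]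
      ring
    rw [Finset.sum_congr rfl hterm, Finset.sum_add_distrib]
    have h1 : ∑ i ∈ Finset.range (j+1), ((i:K)+1) * (Acoef D (i+1) f * Acoef D (j-i) g)
        = ∑ i ∈ Finset.range (j+2), (i:K) * (Acoef D i f * Acoef D (j+1-i) g) := by
      rw [Finset.sum_range_succ' (fun i => (i:K) * (Acoef D i f * Acoef D (j+1-i) g)) (j+1)]
      simp only [Nat.cast_zero, zero_mul, add_zero]
      refine (Finset.sum_congr rfl fun i hi => ?_).symm
      have h : j + 1 - (i+1) = j - i := by omega
      rw [h]
      push_cast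
      ring
    have h2 : ∑ i ∈ Finset.range (j+1), (((j-i:ℕ):K)+1) * (Acoef D i f * Acoef D ((j-i)+1) g)
        = ∑ i ∈ Finset.range (j+2), ((j+1-i : ℕ):K) * (Acoef D i f * Acoef D (j+1-i) g) := by
      rw [Finset.sum_range_succ (fun i => ((j+1-i:ℕ):K) * (Acoef D i f * Acoef D (j+1-i) g))
        (j+1)]
      simp only [Nat.sub_self, Nat.cast_zero, zero_mul, add_zero]
      refine Finset.sum_congr rfl fun i hi => ?_
      have h3 : j + 1 - i = (j - i) + 1 := by
        have := Finset.mem_range.mp hi; omega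
      rw [h3]
      push_cast
      ring
    rw [h1, h2, ← Finset.sum_add_distrib]
    have h4 : ∀ i ∈ Finset.range (j+2),
        (i:K) * (Acoef D i f * Acoef D (j+1-i) g)
            + ((j+1-i:ℕ):K) * (Acoef D i f * Acoef D (j+1-i) g)
          = ((j:K)+1) * (Acoef D i f * Acoef D (j+1-i) g) := by
      intro i hi
      have h5 : i + (j+1-i) = j+1 := by
        have := Finset.mem_range.mp hi; omega
      have h6 : (i:K) + ((j+1-i:ℕ):K) = (j:K)+1 := by
        rw [← Nat.cast_add, h5]; push_cast; ring
      rw [← add_mul, h6]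
    rw [Finset.sum_congr rfl h4, ← Finset.mul_sum, ← mul_assoc, inv_mul_cancel₀ hne, one_mul]

noncomputable def Eser (D : Derivation k K K) (f : K) : PowerSeries K :=
  PowerSeries.mk fun j => ((j.factorial : K))⁻¹ * (⇑D)^[j] f

lemma Eser_coeff (D : Derivation k K K) (f : K) (j : ℕ) :
    PowerSeries.coeff j (Eser D f) = Acoef D j f := PowerSeries.coeff_mk _ _

/-- rationality of a power series -/
def Rat (F : PowerSeries K) : Prop :=
  ∃ P Q : Polynomial K, Q ≠ 0 ∧ (Q : PowerSeries K) * F = (P : PowerSeries K)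

lemma Rat_poly (P : Polynomial K) : Rat (P : PowerSeries K) :=
  ⟨P, 1, one_ne_zero, by rw [Polynomial.coe_one, one_mul]⟩

lemma Rat_add {F G : PowerSeries K} (hF : Rat F) (hG : Rat G) : Rat (F + G) := by
  obtain ⟨P1, Q1, hQ1, h1⟩ := hF
  obtain ⟨P2, Q2, hQ2, h2⟩ := hG
  refine ⟨Q2 * P1 + Q1 * P2, Q1 * Q2, mul_ne_zero hQ1 hQ2, ?_⟩
  push_cast [Polynomial.coe_mul, Polynomial.coe_add]
  rw [mul_add]
  calc (Q1:PowerSeries K) * Q2 * F + (Q1:PowerSeries K) * Q2 * G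
      = (Q2:PowerSeries K) * ((Q1:PowerSeries K) * F)
        + (Q1:PowerSeries K) * ((Q2:PowerSeries K) * G) := by ring
    _ = (Q2:PowerSeries K) * P1 + (Q1:PowerSeries K) * P2 := by rw [h1, h2]

lemma Rat_mul {F G : PowerSeries K} (hF : Rat F) (hG : Rat G) : Rat (F * G) := by
  obtain ⟨P1, Q1, hQ1, h1⟩ := hF
  obtain ⟨P2, Q2, hQ2, h2⟩ := hG
  refine ⟨P1 * P2, Q1 * Q2, mul_ne_zero hQ1 hQ2, ?_⟩
  push_cast [Polynomial.coe_mul]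
  calc (Q1:PowerSeries K) * Q2 * (F * G)
      = ((Q1:PowerSeries K) * F) * ((Q2:PowerSeries K) * G) := by ring
    _ = (P1:PowerSeries K) * P2 := by rw [h1, h2]

lemma Rat_of_inv {F G : PowerSeries K} (h : F * G = 1) (hF : Rat F) : Rat G := by
  obtain ⟨P, Q, hQ, h1⟩ := hF
  have hFne : F ≠ 0 := by
    intro h0
    rw [h0, zero_mul] at h
    exact zero_ne_one h
  have hPne : P ≠ 0 := by
    intro h0
    rw [h0, Polynomial.coe_zero] at h1
    rcases mul_eq_zero.mp h1 with hc | hc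
    · exact hQ (Polynomial.coe_eq_zero_iff.mp hc)
    · exact hFne hc
  refine ⟨Q, P, hPne, ?_⟩
  calc (P : PowerSeries K) * G = (Q : PowerSeries K) * F * G := by rw [h1]
    _ = (Q : PowerSeries K) * (F * G) := by ring
    _ = (Q : PowerSeries K) := by rw [h, mul_one]

lemma iter_D_zero (D : Derivation k K K) (j : ℕ) : (⇑D)^[j] (0 : K) = 0 := by
  induction j with
  | zero => rfl
  | succ j ih => rw [Function.iterate_succ_apply, map_zero, ih]

lemma Eser_add (D : Derivation k K K) (f g : K) :
    Eser D (f + g) = Eser D f + Eser D g := by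
  ext j
  rw [map_add, Eser_coeff, Eser_coeff, Eser_coeff, Acoef_add]

lemma Eser_mul (D : Derivation k K K) (f g : K) :
    Eser D (f * g) = Eser D f * Eser D g := by
  ext j
  rw [Eser_coeff, PowerSeries.coeff_mul, Acoef_mul,
    Finset.Nat.sum_antidiagonal_eq_sum_range_succ_mk]
  exact Finset.sum_congr rfl fun i _ => by rw [Eser_coeff, Eser_coeff]

lemma Eser_const (D : Derivation k K K) {f : K} (h : D f = 0) :
    Eser D f = PowerSeries.C f := by
  ext j
  rw [Eser_coeff, PowerSeries.coeff_C]
  cases j with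
  | zero => simp [Acoef]
  | succ j =>
    rw [Acoef, Function.iterate_succ_apply, h, iter_D_zero, mul_zero]
    simp

lemma Eser_one (D : Derivation k K K) : Eser D (1 : K) = 1 := by
  rw [Eser_const D D.map_one_eq_zero, map_one]

lemma Eser_zero (D : Derivation k K K) : Eser D (0 : K) = 0 := by
  rw [Eser_const D D.map_zero, map_zero]

lemma Rat_Eser_x1 (D : Derivation k K K) (e : Fin (n+1) → ℤ)
    (hmono : ∀ v, D (φ k K v) = ((v 0 : ℤ) : K) * φ k K (v + e)) (he0 : e 0 = 1) :
    Rat (Eser D (φ k K (Pi.single 0 1 : Fin (n+1) → ℤ))) := by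
  haveI : CharZero K := charZero_of_injective_algebraMap (algebraMap k K).injective
  set g : K := φ k K e with hg
  set x : K := φ k K (Pi.single 0 1 : Fin (n+1) → ℤ) with hx
  have hco : ∀ j, PowerSeries.coeff j (Eser D x) = x * g ^ j := by
    intro j
    rw [Eser_coeff, Acoef, hx, Diter D e hmono j, he0, cseq_one, φ_add, φ_nsmul]
    push_cast
    rw [← mul_assoc, inv_mul_cancel₀ (Nat.cast_ne_zero.mpr (Nat.factorial_ne_zero j)), one_mul,
      ← hg]
  refine ⟨Polynomial.C x, 1 - Polynomial.C g * Polynomial.X, ?_, ?_⟩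
  · intro h0
    have h1 : (1 - Polynomial.C g * Polynomial.X).coeff 0 = 0 := by
      rw [h0, Polynomial.coeff_zero]
    simp at h1
  · have hcoe : ((1 - Polynomial.C g * Polynomial.X : Polynomial K) : PowerSeries K)
        = 1 - PowerSeries.C g * PowerSeries.X := by
      push_cast [Polynomial.coe_sub, Polynomial.coe_one, Polynomial.coe_mul,
        Polynomial.coe_C, Polynomial.coe_X]
      ring
    rw [hcoe, Polynomial.coe_C]
    ext m
    rw [sub_mul, one_mul, map_sub, mul_assoc, PowerSeries.coeff_C_mul, PowerSeries.coeff_C]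
    cases m with
    | zero =>
      rw [PowerSeries.coeff_zero_X_mul, hco]
      simp
    | succ m =>
      rw [PowerSeries.coeff_succ_X_mul, hco, hco]
      simp [pow_succ]
      ring

lemma backward (D : Derivation k K K) (e : Fin (n+1) → ℤ)
    (hmono : ∀ v, D (φ k K v) = ((v 0 : ℤ) : K) * φ k K (v + e)) (he0 : e 0 = 1) :
    ∀ f : K, Rat (Eser D f) := by
  haveI : CharZero K := charZero_of_injective_algebraMap (algebraMap k K).injective
  have hone : Rat (Eser D (1 : K)) := by
    rw [Eser_one]
    exact ⟨1, 1, one_ne_zero, by rw [Polynomial.coe_one, one_mul]⟩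
  have hφ : ∀ v : Fin (n+1) → ℤ, Rat (Eser D (φ k K v)) := by
    set A : AddSubgroup (Fin (n + 1) → ℤ) :=
    { carrier := {v | Rat (Eser D (φ k K v))}
      zero_mem' := by
        simp only [Set.mem_setOf_eq, φ_zero]
        exact hone
      add_mem' := by
        intro a b ha hb
        simp only [Set.mem_setOf_eq] at ha hb ⊢
        rw [φ_add, Eser_mul]
        exact Rat_mul ha hb
      neg_mem' := by
        intro a ha
        simp only [Set.mem_setOf_eq] at ha ⊢
        refine Rat_of_inv ?_ ha
        rw [← Eser_mul, φ_mul_φ_neg, Eser_one] }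
    intro v
    have hgen : ∀ i : Fin (n + 1), Pi.single i (1 : ℤ) ∈ A := by
      intro i
      by_cases hi : i = 0
      · subst hi
        exact Rat_Eser_x1 D e hmono he0
      · show Rat (Eser D (φ k K (Pi.single i 1)))
        have hz : D (φ k K (Pi.single i 1 : Fin (n+1) → ℤ)) = 0 := by
          rw [hmono, Pi.single_eq_of_ne (Ne.symm hi), Int.cast_zero, zero_mul]
        rw [Eser_const D hz, ← Polynomial.coe_C]
        exact Rat_poly _
    have hv : (∑ i : Fin (n + 1), (v i) • Pi.single i (1 : ℤ)) ∈ A :=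
      AddSubgroup.sum_mem A fun i _ => AddSubgroup.zsmul_mem A (hgen i) (v i)
    rw [← pi_decomp (n := n) v] at hv
    exact hv
  have hsingle : ∀ (v : Fin (n+1) → ℤ) (c : k),
      Rat (Eser D (algebraMap (AddMonoidAlgebra k (Fin (n + 1) → ℤ)) K
        (AddMonoidAlgebra.single v c))) := by
    intro v c
    have h1 : (AddMonoidAlgebra.single v c : AddMonoidAlgebra k (Fin (n + 1) → ℤ))
        = c • AddMonoidAlgebra.single v (1 : k) := by
      rw [AddMonoidAlgebra.smul_single', mul_one]
    have h2 : algebraMap (AddMonoidAlgebra k (Fin (n + 1) → ℤ)) K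
        (c • AddMonoidAlgebra.single v (1 : k)) = algebraMap k K c * φ k K v := by
      rw [← IsScalarTower.coe_toAlgHom' k (AddMonoidAlgebra k (Fin (n + 1) → ℤ)) K,
        map_smul, Algebra.smul_def]
      rfl
    rw [h1, h2, Eser_mul]
    refine Rat_mul ?_ (hφ v)
    rw [Eser_const D (D.map_algebraMap c), ← Polynomial.coe_C]
    exact Rat_poly _
  have halg : ∀ a : AddMonoidAlgebra k (Fin (n + 1) → ℤ),
      Rat (Eser D (algebraMap (AddMonoidAlgebra k (Fin (n + 1) → ℤ)) K a)) := by
    intro a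
    induction a using AddMonoidAlgebra.induction with
    | zero =>
      rw [map_zero, Eser_zero]
      exact ⟨0, 1, one_ne_zero, by rw [Polynomial.coe_one, one_mul, Polynomial.coe_zero]⟩
    | single_add v c f hv hc ih =>
      rw [map_add, Eser_add]
      exact Rat_add (hsingle v c) ih
  intro f
  obtain ⟨a, b, hb, rfl⟩ := IsFractionRing.div_surjective (A := AddMonoidAlgebra k (Fin (n + 1) → ℤ)) f
  have hbne : algebraMap (AddMonoidAlgebra k (Fin (n + 1) → ℤ)) K b ≠ 0 :=
    IsFractionRing.to_map_ne_zero_of_mem_nonZeroDivisors hb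
  rw [div_eq_mul_inv, Eser_mul]
  refine Rat_mul (halg a) ?_
  refine Rat_of_inv ?_ (halg b)
  rw [← Eser_mul, mul_inv_cancel₀ hbne, Eser_one]

lemma fact_Ico (r i d : ℕ) (h : i ≤ d) :
    (r + d).factorial = (r + i).factorial * ∏ l ∈ Finset.Ico i d, (r + l + 1) := by
  induction d, h using Nat.le_induction with
  | base => simp
  | succ d hd ih =>
    rw [show r + (d+1) = (r+d) + 1 by ring, Nat.factorial_succ, ih,
      Finset.prod_Ico_succ_top hd]
    ring

lemma keyrec [CharZero K] (e₀ : ℤ) (he : 0 ≤ e₀) (hne : e₀ ≠ 1) (d N : ℕ) (b : ℕ → K)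
    (hrec : ∀ r, N ≤ r → ∑ i ∈ Finset.range (d+1),
      b i * (((cseq e₀ (r+i) : ℤ) : K) / (((r+i).factorial : ℕ) : K)) = 0) :
    ∀ i, i ≤ d → b i = 0 := by
  have hint : ∀ m : ℤ, (1 : ℤ) + m * e₀ ≠ 0 := by
    intro m h
    have h1 : e₀ * (-m) = 1 := by linarith
    have h2 : e₀ = 1 := Int.eq_one_of_dvd_one he ⟨-m, h1.symm⟩
    exact hne h2
  set T : ℕ → Polynomial K := fun i =>
    (∏ l ∈ Finset.range i, (Polynomial.C (e₀ : K) * (Polynomial.X + Polynomial.C (l : K)) + 1))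
      * (∏ l ∈ Finset.Ico i d, (Polynomial.X + Polynomial.C ((l : K) + 1))) with hT
  set p : Polynomial K := ∑ i ∈ Finset.range (d+1), Polynomial.C (b i) * T i with hp
  have heval : ∀ r : ℕ, N ≤ r → p.eval (r : K) = 0 := by
    intro r hr
    have hc : ((cseq e₀ r : ℤ) : K) ≠ 0 :=
      Int.cast_ne_zero.mpr (ne_of_gt (cseq_pos e₀ he r))
    have heq : p.eval (r : K)
        = (((r + d).factorial : ℕ) : K) * ((cseq e₀ r : ℤ) : K)⁻¹
          * ∑ i ∈ Finset.range (d+1),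
            b i * (((cseq e₀ (r+i) : ℤ) : K) / (((r+i).factorial : ℕ) : K)) := by
      rw [hp, Polynomial.eval_finset_sum, Finset.mul_sum]
      refine Finset.sum_congr rfl fun i hi => ?_
      have hid : i ≤ d := by have := Finset.mem_range.mp hi; omega
      have hfac : (((r + i).factorial : ℕ) : K) ≠ 0 :=
        Nat.cast_ne_zero.mpr (Nat.factorial_ne_zero _)
      have h1 : ((cseq e₀ (r+i) : ℤ) : K)
          = ((cseq e₀ r : ℤ) : K)
            * ∏ l ∈ Finset.range i, ((e₀ : K) * ((r : K) + (l : K)) + 1) := by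
        rw [cseq_shift e₀ r i, Int.cast_mul, Int.cast_prod]
        congr 1
        refine Finset.prod_congr rfl fun l _ => ?_
        push_cast
        ring
      have h2 : (((r + d).factorial : ℕ) : K)
          = (((r + i).factorial : ℕ) : K) * ∏ l ∈ Finset.Ico i d, ((r : K) + ((l : K) + 1)) := by
        rw [fact_Ico r i d hid, Nat.cast_mul, Nat.cast_prod]
        congr 1
        refine Finset.prod_congr rfl fun l _ => ?_
        push_cast
        ring
      rw [hT]
      simp only [Polynomial.eval_mul, Polynomial.eval_C, Polynomial.eval_prod,
        Polynomial.eval_add, Polynomial.eval_X, Polynomial.eval_one]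
      have key : ∀ (A B c f bi : K), c ≠ 0 → f ≠ 0 →
          f * B * c⁻¹ * (bi * (c * A * f⁻¹)) = bi * (A * B) := by
        intro A B c f bi hcne hfne
        field_simp
      rw [h1, h2, div_eq_mul_inv, key _ _ _ _ _ hc hfac]

    rw [heq, hrec r hr, mul_zero]
  have hp0 : p = 0 := by
    apply Polynomial.eq_zero_of_infinite_isRoot
    have hsub : (fun r : ℕ => (r : K)) '' Set.Ici N ⊆ {x | p.IsRoot x} := by
      rintro x ⟨r, hr, rfl⟩
      exact heval r hr
    have hinf : ((fun r : ℕ => (r : K)) '' Set.Ici N).Infinite :=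
      (Set.Ici_infinite N).image (fun a _ b _ h => Nat.cast_injective h)
    exact Set.Infinite.mono hsub hinf
  have hstep : ∀ i, i ≤ d → (∀ j, i < j → j ≤ d → b j = 0) → b i = 0 := by
    intro i hid IH
    have hsum : p.eval (-(i : K)) = b i * (T i).eval (-(i : K)) := by
      rw [hp, Polynomial.eval_finset_sum]
      rw [Finset.sum_eq_single i]
      · rw [Polynomial.eval_mul, Polynomial.eval_C]
      · intro j hj hji
        rcases lt_or_gt_of_ne hji with hlt | hgt
        · rw [Polynomial.eval_mul, Polynomial.eval_C, hT]
          have hmem : (i - 1 : ℕ) ∈ Finset.Ico j d := Finset.mem_Ico.mpr ⟨by omega, by omega⟩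
          rw [Polynomial.eval_mul]
          have hz : Polynomial.eval (-(i:K))
              (∏ l ∈ Finset.Ico j d, (Polynomial.X + Polynomial.C ((l : K) + 1))) = 0 := by
            rw [Polynomial.eval_prod]
            apply Finset.prod_eq_zero hmem
            rw [Polynomial.eval_add, Polynomial.eval_X, Polynomial.eval_C]
            have hcast : ((i - 1 : ℕ) : K) + 1 = (i : K) := by
              have h1 : 1 ≤ i := by omega
              push_cast [Nat.cast_sub h1]
              ring
            rw [hcast]
            ring
          rw [hz, mul_zero, mul_zero]
        · rw [Polynomial.eval_mul, Polynomial.eval_C,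
            IH j hgt (by have := Finset.mem_range.mp hj; omega), zero_mul]
      · intro h
        exact absurd (Finset.mem_range.mpr (by omega)) h
    rw [hp0, Polynomial.eval_zero] at hsum
    have hTne : (T i).eval (-(i : K)) ≠ 0 := by
      rw [hT]
      rw [Polynomial.eval_mul, Polynomial.eval_prod, Polynomial.eval_prod]
      apply mul_ne_zero
      · rw [Finset.prod_ne_zero_iff]
        intro l hl
        simp only [Polynomial.eval_add, Polynomial.eval_mul, Polynomial.eval_C,
          Polynomial.eval_X, Polynomial.eval_one]
        have hcast : (e₀ : K) * (-(i : K) + (l : K)) + 1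
            = ((1 + ((l : ℤ) - (i : ℤ)) * e₀ : ℤ) : K) := by
          push_cast
          ring
        rw [hcast]
        exact Int.cast_ne_zero.mpr (hint _)
      · rw [Finset.prod_ne_zero_iff]
        intro l hl
        have hl' := Finset.mem_Ico.mp hl
        simp only [Polynomial.eval_add, Polynomial.eval_X, Polynomial.eval_C]
        have hcast : -(i : K) + ((l : K) + 1) = ((l + 1 - i : ℕ) : K) := by
          push_cast [Nat.cast_sub (by omega : i ≤ l + 1)]
          ring
        rw [hcast]
        exact Nat.cast_ne_zero.mpr (by omega)
    rcases mul_eq_zero.mp hsum.symm with h | h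
    · exact h
    · exact absurd h hTne
  have hall : ∀ m : ℕ, ∀ i, i ≤ d → d - i ≤ m → b i = 0 := by
    intro m
    induction m with
    | zero =>
      intro i hid h0
      exact hstep i hid fun j hj hjd => False.elim (by omega)
    | succ m ih =>
      intro i hid hm
      exact hstep i hid fun j hj hjd => ih j hjd (by omega)
  intro i hid
  exact hall d i hid (by omega)

lemma forward (D : Derivation k K K) (e : Fin (n+1) → ℤ) (he : 0 ≤ e 0)
    (hmono : ∀ v, D (φ k K v) = ((v 0 : ℤ) : K) * φ k K (v + e)) (hne : e 0 ≠ 1)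
    (H : Rat (Eser D (φ k K (Pi.single 0 1 : Fin (n+1) → ℤ)))) : False := by
  haveI : CharZero K := charZero_of_injective_algebraMap (algebraMap k K).injective
  obtain ⟨P, Q, hQ, hPQ⟩ := H
  set x : K := φ k K (Pi.single 0 1 : Fin (n+1) → ℤ) with hx
  set g : K := φ k K e with hg
  set d := Q.natDegree with hd
  set N := P.natDegree + 1 with hN
  have hgne : g ≠ 0 := φ_ne k e
  have hxne : x ≠ 0 := φ_ne k _
  have hco : ∀ j, PowerSeries.coeff j (Eser D x)
      = ((cseq (e 0) j : ℤ) : K) / ((j.factorial : ℕ) : K) * (x * g ^ j) := by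
    intro j
    rw [Eser_coeff, Acoef, hx, Diter D e hmono j, φ_add, φ_nsmul, ← hg, ← hx,
      div_eq_mul_inv]
    ring
  have hrel : ∀ r, N ≤ r →
      ∑ i ∈ Finset.range (d+1), Q.coeff (d - i)
        * (((cseq (e 0) (r+i) : ℤ) : K) / (((r+i).factorial : ℕ) : K) * (x * g ^ (r+i)))
      = 0 := by
    intro r hr
    have hm := congrArg (PowerSeries.coeff (r + d)) hPQ
    rw [PowerSeries.coeff_mul, Finset.Nat.sum_antidiagonal_eq_sum_range_succ_mk] at hm
    simp only [Polynomial.coeff_coe] at hm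
    rw [Polynomial.coeff_eq_zero_of_natDegree_lt (by omega : P.natDegree < r + d)] at hm
    rw [← Finset.sum_subset (Finset.range_subset_range.mpr (by omega : d + 1 ≤ r + d + 1))
      (fun i hi hni => by
        rw [Polynomial.coeff_eq_zero_of_natDegree_lt
          (by simp only [Finset.mem_range] at hni ⊢; omega : Q.natDegree < i), zero_mul])] at hm
    have hrefl := Finset.sum_range_reflect (fun i => Q.coeff (d - i)
      * (((cseq (e 0) (r+i) : ℤ) : K) / (((r+i).factorial : ℕ) : K) * (x * g ^ (r+i)))) (d+1)
    rw [← hrefl]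
    refine Eq.trans (Finset.sum_congr rfl fun i hi => ?_) hm
    simp only [Finset.mem_range] at hi
    show Q.coeff (d - (d + 1 - 1 - i))
        * (((cseq (e 0) (r+(d + 1 - 1 - i)) : ℤ) : K) / (((r+(d + 1 - 1 - i)).factorial : ℕ) : K)
          * (x * g ^ (r+(d + 1 - 1 - i))))
      = Q.coeff i * PowerSeries.coeff (r + d - i) (Eser D x)
    have h1 : d + 1 - 1 - i = d - i := by omega
    have h2 : d - (d - i) = i := by omega
    have h3 : r + (d - i) = r + d - i := by omega
    rw [h1, h2, h3, hco]

  have hrec : ∀ r, N ≤ r → ∑ i ∈ Finset.range (d+1), (Q.coeff (d - i) * g ^ i)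
      * (((cseq (e 0) (r+i) : ℤ) : K) / (((r+i).factorial : ℕ) : K)) = 0 := by
    intro r hr
    have h1 : ∑ i ∈ Finset.range (d+1), Q.coeff (d - i)
        * (((cseq (e 0) (r+i) : ℤ) : K) / (((r+i).factorial : ℕ) : K) * (x * g ^ (r+i)))
      = (x * g ^ r) * ∑ i ∈ Finset.range (d+1), (Q.coeff (d - i) * g ^ i)
        * (((cseq (e 0) (r+i) : ℤ) : K) / (((r+i).factorial : ℕ) : K)) := by
      rw [Finset.mul_sum]
      refine Finset.sum_congr rfl fun i _ => ?_
      rw [pow_add]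
      ring
    have h2 := hrel r hr
    rw [h1] at h2
    rcases mul_eq_zero.mp h2 with h | h
    · exact absurd h (mul_ne_zero hxne (pow_ne_zero r hgne))
    · exact h
  have hb := keyrec (e 0) he hne d N (fun i => Q.coeff (d - i) * g ^ i) hrec
  have hQ0 : Q = 0 := by
    ext j
    rw [Polynomial.coeff_zero]
    rcases le_or_gt j d with hj | hj
    · have h2 : d - (d - j) = j := by omega
      have h3 : Q.coeff (d - (d - j)) * g ^ (d - j) = 0 := hb (d - j) (by omega)
      rw [h2] at h3
      rcases mul_eq_zero.mp h3 with h | h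
      · exact h
      · exact absurd h (pow_ne_zero _ hgne)
    · exact Polynomial.coeff_eq_zero_of_natDegree_lt hj
  exact hQ hQ0

end Stmt12

/-- let k be of characteristic 0 and ∂ the derivation of the Laurent
polynomial ring k[x₁^{±1},…,x_m^{±1}] (here m = n+1 variables indexed by Fin (n+1),
x₁ being the variable of index 0) with ∂x₁ = x₁^{e₁+1}x₂^{e₂}⋯x_m^{e_m} and
∂x_i = 0 for i ≥ 2, where e₁ ≥ 0.  The induced derivation on the rational function
field K = Frac(k[x₁^{±1},…]) = k(x₁,…,x_m) is rationally integrable (every formal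
exponential exp(t∂)(f) ∈ K[[t]] is a quotient of polynomials in t) if and only if
e₁ = 1. -/
theorem laurent_monomial_rationally_integrable_iff (k : Type*) [Field k] [CharZero k]
    (n : ℕ) (e : Fin (n + 1) → ℤ) (he : 0 ≤ e 0)
    (K : Type*) [Field K] [Algebra (AddMonoidAlgebra k (Fin (n + 1) → ℤ)) K]
    [IsFractionRing (AddMonoidAlgebra k (Fin (n + 1) → ℤ)) K]
    [Algebra k K] [IsScalarTower k (AddMonoidAlgebra k (Fin (n + 1) → ℤ)) K]
    (D : Derivation k K K)
    (hD1 : D (algebraMap (AddMonoidAlgebra k (Fin (n + 1) → ℤ)) K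
        (AddMonoidAlgebra.single (Pi.single 0 1) (1 : k))) =
      algebraMap (AddMonoidAlgebra k (Fin (n + 1) → ℤ)) K
        (AddMonoidAlgebra.single (e + Pi.single 0 1) (1 : k)))
    (hD2 : ∀ i : Fin (n + 1), i ≠ 0 →
      D (algebraMap (AddMonoidAlgebra k (Fin (n + 1) → ℤ)) K
          (AddMonoidAlgebra.single (Pi.single i 1) (1 : k))) = 0) :
    (∀ f : K, ∃ P Q : Polynomial K, Q ≠ 0 ∧
        (Q : PowerSeries K) *
          (PowerSeries.mk fun j => ((j.factorial : K)⁻¹) * ((⇑D)^[j] f)) = P)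
      ↔ e 0 = 1 := by
  have hD1' : D (Stmt12.φ k K (Pi.single 0 1 : Fin (n+1) → ℤ))
      = Stmt12.φ k K (e + Pi.single 0 1) := hD1
  have hD2' : ∀ i : Fin (n+1), i ≠ 0 →
      D (Stmt12.φ k K (Pi.single i 1 : Fin (n+1) → ℤ)) = 0 := hD2
  have hmono := Stmt12.Dmono D e hD1' hD2'
  constructor
  · intro H
    by_contra hne
    exact Stmt12.forward D e he hmono hne
      (H (Stmt12.φ k K (Pi.single 0 1 : Fin (n+1) → ℤ)))
  · intro he0 f
    exact Stmt12.backward D e hmono he0 f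
end

section
/- Let k be a field of characteristic zero and ∂ : K → K a rationally integrable k-derivation of a finitely generated field extension K = k(f₁,…,f_n). Then ∂ is rationally integrable if and only if exp(t∂)(f_i) ∈ K(t) for every i = 1,…,n. -/
open Finset Polynomial PowerSeries

section aux
variable {k K : Type*} [Field k] [Field K] [Algebra k K] (D : Derivation k K K)

noncomputable def expD (g : K) : PowerSeries K :=
  PowerSeries.mk fun j => ((j.factorial : K)⁻¹) * ((⇑D)^[j] g)

lemma iterD_add (j : ℕ) (g h : K) :
    (⇑D)^[j] (g + h) = (⇑D)^[j] g + (⇑D)^[j] h := by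
  induction j generalizing g h with
  | zero => simp
  | succ j ih => simp [Function.iterate_succ_apply, map_add, ih]

lemma iterD_zero (j : ℕ) : (⇑D)^[j] (0 : K) = 0 := by
  induction j with
  | zero => rfl
  | succ j ih => simp [Function.iterate_succ_apply, ih]

lemma iterD_neg (j : ℕ) (g : K) : (⇑D)^[j] (-g) = -((⇑D)^[j] g) := by
  induction j generalizing g with
  | zero => simp
  | succ j ih => simp [Function.iterate_succ_apply, map_neg, ih]

lemma iterD_leibniz (j : ℕ) (g h : K) :
    (⇑D)^[j] (g * h) =
      ∑ i ∈ range (j + 1), j.choose i • ((⇑D)^[j - i] g * (⇑D)^[i] h) := by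
  induction j with
  | zero => simp [Finset.range]
  | succ n IH =>
    calc
      (⇑D)^[n + 1] (g * h) =
          D (∑ i ∈ range n.succ, n.choose i • ((⇑D)^[n - i] g * (⇑D)^[i] h)) := by
        rw [Function.iterate_succ_apply', IH]
      _ = (∑ i ∈ range n.succ,
            n.choose i • ((⇑D)^[n - i + 1] g * (⇑D)^[i] h)) +
          ∑ i ∈ range n.succ,
            n.choose i • ((⇑D)^[n - i] g * (⇑D)^[i + 1] h) := by
        rw [map_sum, ← sum_add_distrib]
        refine sum_congr rfl fun i hi => ?_
        rw [map_nsmul, Derivation.leibniz, Function.iterate_succ_apply',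
          Function.iterate_succ_apply']
        simp only [smul_eq_mul, nsmul_eq_mul, smul_add]
        ring
      _ = (∑ i ∈ range n.succ,
                n.choose i.succ • ((⇑D)^[n - i] g * (⇑D)^[i + 1] h)) +
              1 • ((⇑D)^[n + 1] g * (⇑D)^[0] h) +
            ∑ i ∈ range n.succ, n.choose i • ((⇑D)^[n - i] g * (⇑D)^[i + 1] h) :=
        ?_
      _ = ((∑ i ∈ range n.succ, n.choose i • ((⇑D)^[n - i] g * (⇑D)^[i + 1] h)) +
              ∑ i ∈ range n.succ,
                n.choose i.succ • ((⇑D)^[n - i] g * (⇑D)^[i + 1] h)) +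
            1 • ((⇑D)^[n + 1] g * (⇑D)^[0] h) := by
        rw [add_comm, add_assoc]
      _ = (∑ i ∈ range n.succ,
              (n + 1).choose (i + 1) • ((⇑D)^[n + 1 - (i + 1)] g * (⇑D)^[i + 1] h)) +
            1 • ((⇑D)^[n + 1] g * (⇑D)^[0] h) := by
        simp_rw [Nat.choose_succ_succ, Nat.succ_sub_succ, add_smul, sum_add_distrib]
      _ = ∑ i ∈ range n.succ.succ,
            n.succ.choose i • ((⇑D)^[n.succ - i] g * (⇑D)^[i] h) := by
        rw [sum_range_succ' _ n.succ, Nat.choose_zero_right, tsub_zero]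
    congr
    refine (sum_range_succ' _ _).trans (congr_arg₂ (· + ·) ?_ ?_)
    · rw [sum_range_succ, Nat.choose_succ_self, zero_smul, add_zero]
      refine sum_congr rfl fun i hi => ?_
      rw [mem_range] at hi
      congr
      omega
    · rw [Nat.choose_zero_right, tsub_zero]

variable [CharZero k]

lemma charZeroK (k' : Type*) [Field k'] [CharZero k'] (K' : Type*) [Field K'] [Algebra k' K'] :
    CharZero K' :=
  charZero_of_injective_algebraMap (algebraMap k' K').injective

set_option linter.unusedSectionVars false

lemma expD_add (g h : K) : expD D (g + h) = expD D g + expD D h := by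
  ext j
  simp [expD, iterD_add, mul_add]

lemma expD_neg (g : K) : expD D (-g) = -expD D g := by
  ext j
  simp [expD, iterD_neg]

lemma expD_zeroK : expD D (0 : K) = 0 := by
  ext j
  simp [expD, iterD_zero]

lemma expD_mul (g h : K) : expD D (g * h) = expD D g * expD D h := by
  haveI : CharZero K := charZeroK k K
  ext j
  rw [PowerSeries.coeff_mul]
  rw [Finset.Nat.sum_antidiagonal_eq_sum_range_succ_mk]
  rw [← Finset.sum_range_reflect]
  simp only [expD, PowerSeries.coeff_mk]
  rw [iterD_leibniz, mul_sum]
  refine sum_congr rfl fun i hi => ?_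
  rw [mem_range, Nat.lt_succ_iff] at hi
  have h1 : j + 1 - 1 - i = j - i := by omega
  have h2 : j - (j - i) = i := by omega
  rw [h1, h2]
  have key : (j.factorial : K)⁻¹ * (j.choose i : K) =
      ((j - i).factorial : K)⁻¹ * ((i.factorial : K)⁻¹) := by
    have := Nat.choose_mul_factorial_mul_factorial hi
    have h3 : ((j.choose i : K) * i.factorial * (j - i).factorial) = (j.factorial : K) := by
      exact_mod_cast congrArg (Nat.cast : ℕ → K) this
    have hc : (j.choose i : K) ≠ 0 := Nat.cast_ne_zero.mpr (Nat.choose_pos hi).ne'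
    have hfi : (i.factorial : K) ≠ 0 := Nat.cast_ne_zero.mpr i.factorial_ne_zero
    have hfj : ((j - i).factorial : K) ≠ 0 := Nat.cast_ne_zero.mpr (j - i).factorial_ne_zero
    rw [← h3, mul_inv, mul_inv]
    field_simp
  rw [nsmul_eq_mul, ← mul_assoc, key]
  ring

lemma expD_algebraMap (c : k) :
    expD D (algebraMap k K c) = PowerSeries.C (algebraMap k K c) := by
  ext j
  cases j with
  | zero => simp [expD]
  | succ m =>
    have : (⇑D)^[m + 1] (algebraMap k K c) = 0 := by
      rw [Function.iterate_succ_apply, Derivation.map_algebraMap, iterD_zero]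
    simp [expD, this]

lemma expD_one : expD D (1 : K) = 1 := by
  have := expD_algebraMap D (1 : k)
  simpa using this

lemma expD_constantCoeff (g : K) : PowerSeries.constantCoeff (expD D g) = g := by
  simp [expD, ← PowerSeries.coeff_zero_eq_constantCoeff]

end aux

section closure
variable {k K : Type*} [Field k] [CharZero k] [Field K] [Algebra k K] (D : Derivation k K K)

/-- Rational integrability of exp(tD) at a single element. -/
def RatInt (g : K) : Prop :=
  ∃ P Q : Polynomial K, Q ≠ 0 ∧ (Q : PowerSeries K) * expD D g = P

lemma rat_zero : RatInt D (0 : K) :=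
  ⟨0, 1, one_ne_zero, by simp [expD_zeroK]⟩

lemma rat_add {g h : K} (hg : RatInt D g) (hh : RatInt D h) : RatInt D (g + h) := by
  obtain ⟨P1, Q1, h1, e1⟩ := hg
  obtain ⟨P2, Q2, h2, e2⟩ := hh
  refine ⟨Q2 * P1 + Q1 * P2, Q1 * Q2, mul_ne_zero h1 h2, ?_⟩
  rw [expD_add, Polynomial.coe_add, Polynomial.coe_mul, Polynomial.coe_mul, Polynomial.coe_mul]
  linear_combination (Q2 : PowerSeries K) * e1 + (Q1 : PowerSeries K) * e2

lemma rat_mul {g h : K} (hg : RatInt D g) (hh : RatInt D h) : RatInt D (g * h) := by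
  obtain ⟨P1, Q1, h1, e1⟩ := hg
  obtain ⟨P2, Q2, h2, e2⟩ := hh
  refine ⟨P1 * P2, Q1 * Q2, mul_ne_zero h1 h2, ?_⟩
  rw [expD_mul, Polynomial.coe_mul, Polynomial.coe_mul]
  linear_combination ((Q2 : PowerSeries K) * expD D h) * e1 + (P1 : PowerSeries K) * e2

lemma rat_neg {g : K} (hg : RatInt D g) : RatInt D (-g) := by
  obtain ⟨P1, Q1, h1, e1⟩ := hg
  exact ⟨-P1, Q1, h1, by rw [expD_neg, Polynomial.coe_neg]; linear_combination -e1⟩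

lemma rat_algebraMap (c : k) : RatInt D (algebraMap k K c) :=
  ⟨Polynomial.C (algebraMap k K c), 1, one_ne_zero, by
    simp [expD_algebraMap, Polynomial.coe_one, Polynomial.coe_C]⟩

lemma rat_one : RatInt D (1 : K) := by
  simpa using rat_algebraMap D (1 : k)

lemma rat_inv (g : K) (hg : RatInt D g) : RatInt D g⁻¹ := by
  haveI : CharZero K := charZeroK k K
  by_cases h0 : g = 0
  · subst h0; simpa using rat_zero D
  obtain ⟨P, Q, hQ, e⟩ := hg
  have hEg : expD D g ≠ 0 := fun h => h0 (by rw [← expD_constantCoeff D g, h, map_zero])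
  have hP : P ≠ 0 := by
    intro h
    subst h
    rw [Polynomial.coe_zero] at e
    rcases mul_eq_zero.mp e with h' | h'
    · exact hQ (Polynomial.coe_eq_zero_iff.mp h')
    · exact hEg h'
  refine ⟨Q, P, hP, ?_⟩
  have hmul : expD D g * expD D g⁻¹ = 1 := by
    rw [← expD_mul, mul_inv_cancel₀ h0, expD_one]
  rw [← e, mul_assoc, hmul, mul_one]

end closure

/-- let K = k(f₁,…,f_n) be a finitely generated field extension of a
field k of characteristic zero and ∂ a k-derivation of K.  Then ∂ is rationally
integrable (exp(t∂)(f) ∈ K(t) for every f ∈ K) if and only if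
exp(t∂)(fᵢ) ∈ K(t) for every i = 1,…,n.  (Membership of a power series in K(t) is
expressed as being a quotient of two polynomials in t.) -/
theorem rationally_integrable_iff_on_generators (k : Type*) [Field k] [CharZero k]
    (K : Type*) [Field K] [Algebra k K]
    (n : ℕ) (f : Fin n → K)
    (hgen : IntermediateField.adjoin k (Set.range f) = ⊤)
    (D : Derivation k K K) :
    (∀ g : K, ∃ P Q : Polynomial K, Q ≠ 0 ∧
        (Q : PowerSeries K) *
          (PowerSeries.mk fun j => ((j.factorial : K)⁻¹) * ((⇑D)^[j] g)) = P)
      ↔ (∀ i : Fin n, ∃ P Q : Polynomial K, Q ≠ 0 ∧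
        (Q : PowerSeries K) *
          (PowerSeries.mk fun j => ((j.factorial : K)⁻¹) * ((⇑D)^[j] (f i))) = P) := by
  constructor
  · intro h i
    exact h (f i)
  · intro h g
    let S : Subfield K :=
      { carrier := {x | RatInt D x}
        mul_mem' := fun ha hb => rat_mul D ha hb
        one_mem' := rat_one D
        add_mem' := fun ha hb => rat_add D ha hb
        zero_mem' := rat_zero D
        neg_mem' := fun ha => rat_neg D ha
        inv_mem' := fun x hx => rat_inv D x hx }
    let S' : IntermediateField k K := S.toIntermediateField fun c => rat_algebraMap D c
    have hle : IntermediateField.adjoin k (Set.range f) ≤ S' :=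
      IntermediateField.adjoin_le_iff.mpr (by rintro _ ⟨i, rfl⟩; exact h i)
    rw [hgen] at hle
    exact hle (IntermediateField.mem_top (x := g))
end
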